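/- Let B(a, r) ⊆ B(0, R) ⊆ R^d. Every affine map (A, x₀) with φ(B(a,r)) ⊆ B(0,R) satisfies sqrt(‖A‖_F² + ‖x₀‖₂²) ≤ (3R/r)·sqrt(R² + d). Hence Lin(B(a,r) → B(0,R)), viewed as a subset of R^{d×(d+1)}, is contained in a ball of radius (3R/r)·sqrt(R²+d) around the origin. -/

import Mathlib

/-- The Frobenius norm of a square real matrix. -/
noncomputable def frobNorm {d : ℕ} (A : Matrix (Fin d) (Fin d) ℝ) : ℝ :=
  Real.sqrt (∑ i, ∑ j, (A i j) ^ 2)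

set_option maxHeartbeats 1000000 in
/-- if `B(a,r) ⊆ B(0,R)` and the affine map `(A, x₀)` maps `B(a,r)` into
`B(0,R)`, then `sqrt(‖A‖_F² + ‖x₀‖²) ≤ (3R/r)·sqrt(R² + d)`; i.e. `Lin(B(a,r) → B(0,R))`
is contained in the ball of that radius around the origin of `ℝ^{d×(d+1)}`. -/
theorem frobenius_bound_of_mapsTo_balls {d : ℕ} (a : EuclideanSpace ℝ (Fin d)) (r R : ℝ)
    (hr : 0 < r)
    (hsub : Metric.closedBall a r ⊆ Metric.closedBall (0 : EuclideanSpace ℝ (Fin d)) R)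
    (A : Matrix (Fin d) (Fin d) ℝ) (x₀ : EuclideanSpace ℝ (Fin d))
    (hφ : ∀ x ∈ Metric.closedBall a r,
      Matrix.toEuclideanLin A x + x₀ ∈ Metric.closedBall (0 : EuclideanSpace ℝ (Fin d)) R) :
    Real.sqrt (frobNorm A ^ 2 + ‖x₀‖ ^ 2) ≤ (3 * R / r) * Real.sqrt (R ^ 2 + d) := by
  set L := Matrix.toEuclideanLin A with hL
  -- a is in the small ball, hence ‖a‖ ≤ R
  have ha_mem : a ∈ Metric.closedBall a r := Metric.mem_closedBall_self hr.le
  have haR : ‖a‖ ≤ R := by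
    have := hsub ha_mem
    simpa [Metric.mem_closedBall, dist_eq_norm] using this
  have hR0 : 0 ≤ R := le_trans (norm_nonneg a) haR
  -- key lemma: for ‖w‖ ≤ r, ‖L w‖ ≤ 2 R
  have key : ∀ w : EuclideanSpace ℝ (Fin d), ‖w‖ ≤ r → ‖L w‖ ≤ 2 * R := by
    intro w hw
    have hmem : a + w ∈ Metric.closedBall a r := by
      simpa [Metric.mem_closedBall, dist_eq_norm] using hw
    have h1 : ‖L (a + w) + x₀‖ ≤ R := by
      have := hφ _ hmem
      simpa [Metric.mem_closedBall, dist_eq_norm] using this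
    have h2 : ‖L a + x₀‖ ≤ R := by
      have := hφ _ ha_mem
      simpa [Metric.mem_closedBall, dist_eq_norm] using this
    have heq : L w = (L (a + w) + x₀) - (L a + x₀) := by
      rw [map_add]; abel
    calc ‖L w‖ = ‖(L (a + w) + x₀) - (L a + x₀)‖ := by rw [heq]
      _ ≤ ‖L (a + w) + x₀‖ + ‖L a + x₀‖ := norm_sub_le _ _
      _ ≤ 2 * R := by linarith
  rcases Nat.eq_zero_or_pos d with hd | hd
  · -- degenerate case d = 0
    subst hd
    have hx0 : x₀ = 0 := Subsingleton.elim _ _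
    have : Real.sqrt (frobNorm A ^ 2 + ‖x₀‖ ^ 2) = 0 := by
      simp [frobNorm, hx0]
    rw [this]
    have : (0:ℝ) ≤ 3 * R / r := by positivity
    positivity
  · -- main case d ≥ 1
    -- first, r ≤ R
    obtain ⟨i0⟩ : Nonempty (Fin d) := ⟨⟨0, hd⟩⟩
    have hrR : r ≤ R := by
      set e : EuclideanSpace ℝ (Fin d) := EuclideanSpace.single i0 (1:ℝ) with he
      have hne : ‖e‖ = 1 := by simp [he]
      have h1 : ‖a + r • e‖ ≤ R := by
        have hmem : a + r • e ∈ Metric.closedBall a r := by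
          simp [Metric.mem_closedBall, dist_eq_norm, norm_smul, hne, abs_of_pos hr]
        have := hsub hmem
        simpa [Metric.mem_closedBall, dist_eq_norm] using this
      have h2 : ‖a - r • e‖ ≤ R := by
        have hmem : a - r • e ∈ Metric.closedBall a r := by
          simp [Metric.mem_closedBall, dist_eq_norm, norm_smul, hne, abs_of_pos hr]
        have := hsub hmem
        simpa [Metric.mem_closedBall, dist_eq_norm] using this
      have : ‖(a + r • e) - (a - r • e)‖ ≤ 2 * R := by
        calc ‖(a + r • e) - (a - r • e)‖ ≤ ‖a + r • e‖ + ‖a - r • e‖ := norm_sub_le _ _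
          _ ≤ 2 * R := by linarith
      have h3 : ‖(a + r • e) - (a - r • e)‖ = 2 * r := by
        have : (a + r • e) - (a - r • e) = (2 * r) • e := by
          rw [two_mul, add_smul]; abel
        rw [this, norm_smul, hne]
        simp [abs_of_pos hr]
      linarith [h3 ▸ this]
    -- column bound
    have hcol : ∀ j : Fin d, ∑ i, (A i j) ^ 2 ≤ (2 * R / r) ^ 2 := by
      intro j
      set e : EuclideanSpace ℝ (Fin d) := EuclideanSpace.single j (1:ℝ) with he
      have hne : ‖e‖ = 1 := by simp [he]
      have hre : ‖r • e‖ ≤ r := by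
        simp [norm_smul, hne, abs_of_pos hr]
      have h1 : ‖L (r • e)‖ ≤ 2 * R := key _ hre
      have h2 : ‖L (r • e)‖ = r * ‖L e‖ := by
        rw [map_smul, norm_smul, Real.norm_eq_abs, abs_of_pos hr]
      have h3 : ‖L e‖ ≤ 2 * R / r := by
        rw [h2] at h1
        rw [le_div_iff₀ hr]
        linarith [h1]
      have h4 : ‖L e‖ ^ 2 = ∑ i, (A i j) ^ 2 := by
        rw [EuclideanSpace.norm_eq]
        rw [Real.sq_sqrt (by positivity)]
        congr 1
        ext i
        have : (L e) i = A i j := by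
          rw [hL, he, Matrix.toEuclideanLin_apply]
          simp [Matrix.mulVec, dotProduct, EuclideanSpace.single_apply]
        rw [this, Real.norm_eq_abs, sq_abs]
      rw [← h4]
      have : (0:ℝ) ≤ ‖L e‖ := norm_nonneg _
      nlinarith [h3]
    -- Frobenius bound
    have hF : frobNorm A ^ 2 ≤ d * (2 * R / r) ^ 2 := by
      have h0 : (0:ℝ) ≤ ∑ i, ∑ j, (A i j) ^ 2 := by positivity
      rw [frobNorm, Real.sq_sqrt h0]
      rw [Finset.sum_comm]
      calc ∑ j, ∑ i, (A i j) ^ 2 ≤ ∑ _j : Fin d, (2 * R / r) ^ 2 :=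
            Finset.sum_le_sum (fun j _ => hcol j)
        _ = d * (2 * R / r) ^ 2 := by simp [Finset.sum_const, mul_comm]
    -- bound on ‖L a‖
    have hLa : ‖L a‖ ≤ 2 * R / r * ‖a‖ := by
      rcases eq_or_ne a 0 with h | h
      · simp [h]
      · have hna : 0 < ‖a‖ := norm_pos_iff.mpr h
        have hw : ‖(r / ‖a‖) • a‖ ≤ r := by
          rw [norm_smul, Real.norm_eq_abs, abs_of_pos (by positivity)]
          rw [div_mul_cancel₀ _ hna.ne']
        have h1 : ‖L ((r / ‖a‖) • a)‖ ≤ 2 * R := key _ hw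
        rw [map_smul, norm_smul, Real.norm_eq_abs, abs_of_pos (by positivity),
          div_mul_eq_mul_div, div_le_iff₀ hna] at h1
        rw [div_mul_eq_mul_div, le_div_iff₀ hr]
        linarith [h1]
    -- bound on ‖x₀‖
    have hx₀ : ‖x₀‖ ≤ R + 2 * R / r * R := by
      have h2 : ‖L a + x₀‖ ≤ R := by
        have := hφ _ ha_mem
        simpa [Metric.mem_closedBall, dist_eq_norm] using this
      have : ‖x₀‖ ≤ ‖L a + x₀‖ + ‖L a‖ := by
        calc ‖x₀‖ = ‖(L a + x₀) - L a‖ := by congr 1; abel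
          _ ≤ ‖L a + x₀‖ + ‖L a‖ := norm_sub_le _ _
      have hLaR : ‖L a‖ ≤ 2 * R / r * R := by
        calc ‖L a‖ ≤ 2 * R / r * ‖a‖ := hLa
          _ ≤ 2 * R / r * R := by
              apply mul_le_mul_of_nonneg_left haR (by positivity)
      linarith
    -- conclude
    have hsq : frobNorm A ^ 2 + ‖x₀‖ ^ 2 ≤ (3 * R / r * Real.sqrt (R ^ 2 + d)) ^ 2 := by
      have hd0 : (0:ℝ) ≤ (d:ℝ) := Nat.cast_nonneg d
      have hrs : (3 * R / r * Real.sqrt (R ^ 2 + d)) ^ 2 = (3 * R / r) ^ 2 * (R ^ 2 + d) := by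
        rw [mul_pow, Real.sq_sqrt (by positivity)]
      rw [hrs]
      have hx0nn : (0:ℝ) ≤ ‖x₀‖ := norm_nonneg _
      have hxsq : ‖x₀‖ ^ 2 ≤ (R + 2 * R / r * R) ^ 2 := by nlinarith [hx₀]
      have e1 : (2 * R / r) ^ 2 = 4 * R ^ 2 / r ^ 2 := by ring
      have e2 : (3 * R / r) ^ 2 = 9 * R ^ 2 / r ^ 2 := by ring
      have hr2 : (0:ℝ) < r ^ 2 := by positivity
      rw [e1] at hF
      rw [e2]
      have expand : 9 * R ^ 2 / r ^ 2 * (R ^ 2 + d) - ((d : ℝ) * (4 * R ^ 2 / r ^ 2) + (R + 2 * R / r * R) ^ 2)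
          = (5 * R ^ 2 * d + 5 * R ^ 4 - R ^ 2 * r ^ 2 - 4 * R ^ 3 * r) / r ^ 2 := by
        field_simp; ring
      have hnum : (0:ℝ) ≤ 5 * R ^ 2 * d + 5 * R ^ 4 - R ^ 2 * r ^ 2 - 4 * R ^ 3 * r := by
        have hrr : r * r ≤ R * R := mul_le_mul hrR hrR hr.le hR0
        have hb1 : R ^ 2 * r ^ 2 ≤ R ^ 2 * R ^ 2 := by
          have := mul_le_mul_of_nonneg_left hrr (sq_nonneg R)
          nlinarith [this]
        have hb2 : R ^ 3 * r ≤ R ^ 3 * R := mul_le_mul_of_nonneg_left hrR (by positivity)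
        have hb3 : (0:ℝ) ≤ R ^ 2 * d := by positivity
        nlinarith [hb1, hb2, hb3]
      have hdiv : (0:ℝ) ≤ (5 * R ^ 2 * d + 5 * R ^ 4 - R ^ 2 * r ^ 2 - 4 * R ^ 3 * r) / r ^ 2 :=
        div_nonneg hnum hr2.le
      linarith [expand, hdiv, hF, hxsq]
    calc Real.sqrt (frobNorm A ^ 2 + ‖x₀‖ ^ 2)
        ≤ Real.sqrt ((3 * R / r * Real.sqrt (R ^ 2 + d)) ^ 2) := Real.sqrt_le_sqrt hsq
      _ = 3 * R / r * Real.sqrt (R ^ 2 + d) := Real.sqrt_sq (by positivity)
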